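/- arXiv:1303.0308 — 5 statements merged into one kernel-verified Lean document; each statement's English description precedes it below -/
import Mathlib

section
/- Let Π be a real (n₁−n₂)×n₂ matrix and Ψ a symmetric positive definite n₁×n₁ real matrix, partitioned as Ψ = [[Ψ₁₁, Ψ₁₂],[Ψ₁₂ᵀ, Ψ₂₂]] with Ψ₁₁ of size n₂×n₂. Define Ψᵉ := [[I, Πᵀ],[0,0]] · Ψ · [[I, 0],[Π, 0]] (block matrices of size n₁×n₁). Then Ψ − Ψᵉ is positive semidefinite if and only if Ψ₁₂ = −Πᵀ Ψ₂₂. -/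
open Matrix

/-- For symmetric positive definite `Ψ` partitioned in blocks,
`Ψ − Ψᵉ ⪰ 0` iff `Ψ₁₂ = −Pᵀ Ψ₂₂`, where
`Ψᵉ = [[I, Pᵀ],[0,0]] * Ψ * [[I,0],[P,0]]`. -/
theorem stmt0 (n₂ m : ℕ)
    (P : Matrix (Fin m) (Fin n₂) ℝ)
    (Ψ : Matrix (Fin n₂ ⊕ Fin m) (Fin n₂ ⊕ Fin m) ℝ)
    (hsym : Ψ.IsSymm) (hpd : Ψ.PosDef)
    (Ψe : Matrix (Fin n₂ ⊕ Fin m) (Fin n₂ ⊕ Fin m) ℝ)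
    (hΨe : Ψe = (Matrix.fromBlocks 1 Pᵀ 0 0) * Ψ * (Matrix.fromBlocks 1 0 P 0)) :
    (Ψ - Ψe).PosSemidef ↔ Ψ.toBlocks₁₂ = -(Pᵀ * Ψ.toBlocks₂₂) := by
  set A := Ψ.toBlocks₁₁ with hA
  set B := Ψ.toBlocks₁₂ with hB
  set C := Ψ.toBlocks₂₂ with hC
  -- Ψ as a block matrix
  have hΨb : Ψ = fromBlocks A B Bᴴ C := by
    ext i j
    cases i <;> cases j <;>
      simp [fromBlocks, toBlocks₁₁, toBlocks₁₂, toBlocks₂₁, toBlocks₂₂, hA, hB, hC,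
        hsym.apply]
  have hCt : Cᵀ = C := by
    ext i j
    simp [hC, toBlocks₂₂, hsym.apply]
  -- C is positive definite
  have hCpd : C.PosDef := by
    rw [posDef_iff_dotProduct_mulVec]
    constructor
    · ext i j
      simp [hC, toBlocks₂₂, hsym.apply]
    · intro v hv
      have hx : Sum.elim (0 : Fin n₂ → ℝ) v ≠ 0 := by
        intro h
        apply hv
        ext i
        exact congrFun h (Sum.inr i)
      have := hpd.dotProduct_mulVec_pos hx
      rw [hΨb] at this
      simpa [fromBlocks_mulVec, dotProduct_block] using this
  have hinv : Invertible C := hCpd.isUnit.invertible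
  have h1 : C⁻¹ * C = 1 := inv_mul_of_invertible C
  have h2 : C * C⁻¹ = 1 := mul_inv_of_invertible C
  set M := B + Pᵀ * C with hM
  -- rewrite Ψ - Ψe as a block matrix
  have hdiff : Ψ - Ψe =
      fromBlocks (A - (A + Pᵀ * Bᴴ + (B + Pᵀ * C) * P)) B Bᴴ C := by
    rw [hΨe, hΨb, fromBlocks_multiply, fromBlocks_multiply]
    ext i j
    cases i <;> cases j <;>
      simp [fromBlocks, Matrix.add_mul, Matrix.sub_apply, Matrix.add_apply,
        Matrix.neg_apply, ← hA]
  -- the Schur complement computation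
  have hMH : Mᴴ = Bᴴ + C * P := by
    simp [hM, conjTranspose_add, conjTranspose_mul, hCpd.1.eq, hCt]
  have e1 : ∀ X : Matrix (Fin m) (Fin n₂) ℝ, C⁻¹ * (C * X) = X := fun X => by
    rw [← Matrix.mul_assoc, h1, Matrix.one_mul]
  have e2 : ∀ X : Matrix (Fin m) (Fin n₂) ℝ, C * (C⁻¹ * X) = X := fun X => by
    rw [← Matrix.mul_assoc, h2, Matrix.one_mul]
  have hschur : (A - (A + Pᵀ * Bᴴ + (B + Pᵀ * C) * P)) - B * C⁻¹ * Bᴴ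
      = -(M * C⁻¹ * Mᴴ) := by
    rw [hMH, hM]
    simp only [Matrix.add_mul, Matrix.mul_add, Matrix.mul_assoc, e1, e2]
    abel
  rw [hdiff, PosDef.fromBlocks₂₂ _ _ hCpd, hschur]
  have hCinv : (C⁻¹).PosDef := hCpd.inv
  constructor
  · intro h
    have hMz : M = 0 := by
      have key : ∀ x, Mᴴ *ᵥ x = 0 := by
        intro x
        by_contra hy
        have hpos := hCinv.dotProduct_mulVec_pos hy
        have hle := h.dotProduct_mulVec_nonneg x
        rw [neg_mulVec, dotProduct_neg] at hle
        have hq : star x ⬝ᵥ (M * C⁻¹ * Mᴴ) *ᵥ x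
            = star (Mᴴ *ᵥ x) ⬝ᵥ C⁻¹ *ᵥ (Mᴴ *ᵥ x) := by
          rw [star_mulVec, conjTranspose_conjTranspose, ← Matrix.mulVec_mulVec,
            ← Matrix.mulVec_mulVec, dotProduct_mulVec]
        rw [hq] at hle
        linarith
      ext i j
      have := congrFun (key (Pi.single i 1)) j
      simpa [mulVec_single, conjTranspose_apply] using this
    rw [hM, add_eq_zero_iff_eq_neg] at hMz
    exact hMz
  · intro h
    have hMz : M = 0 := by rw [hM, h]; abel
    rw [hMz]
    simp [Matrix.PosSemidef.zero]
end

section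
/- Let R ∈ ℝ[ξ]^{w×w} be nonsingular (det R ≠ 0) and write n = deg det R. The set 𝔛(R) = { f ∈ ℝ[ξ]^{1×w} : f · R⁻¹ is a strictly proper rational row vector } is an ℝ-vector subspace of ℝ[ξ]^{1×w} of dimension n. -/
open Matrix Polynomial

/-- A rational function is strictly proper if its numerator has strictly smaller
degree than its denominator. -/
def StrictlyProperRF (g : RatFunc ℝ) : Prop := g.num.degree < g.denom.degree


section helperLemmas


lemma sp_div_iff (p q : Polynomial ℝ) (hq : q ≠ 0) :
    StrictlyProperRF (algebraMap (Polynomial ℝ) (RatFunc ℝ) p / algebraMap _ _ q) ↔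
      p.degree < q.degree := by
  classical
  set g := GCDMonoid.gcd p q with hgdef
  have hg : g ≠ 0 := fun h => hq ((gcd_eq_zero_iff p q).mp h).2
  have hq' : q / g ≠ 0 := right_div_gcd_ne_zero hq
  have hc : ((q / g).leadingCoeff)⁻¹ ≠ 0 := inv_ne_zero (leadingCoeff_ne_zero.mpr hq')
  unfold StrictlyProperRF
  rw [RatFunc.num_div, RatFunc.denom_div p hq]
  rw [degree_C_mul hc, degree_C_mul hc]
  have hqq : g * (q / g) = q := EuclideanDomain.mul_div_cancel' hg (gcd_dvd_right p q)
  by_cases hp : p = 0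
  · subst hp
    simp only [EuclideanDomain.zero_div, degree_zero]
    constructor <;> intro _
    · exact bot_lt_iff_ne_bot.mpr (degree_eq_bot.not.mpr hq)
    · exact bot_lt_iff_ne_bot.mpr (degree_eq_bot.not.mpr hq')
  · have hpp : g * (p / g) = p := EuclideanDomain.mul_div_cancel' hg (gcd_dvd_left p q)
    conv_rhs => rw [← hpp, ← hqq]
    rw [degree_mul, degree_mul]
    exact (WithBot.add_lt_add_iff_left (degree_eq_bot.not.mpr hg)).symm

lemma sp_polynomial_eq_zero {p : Polynomial ℝ}
    (h : StrictlyProperRF (algebraMap (Polynomial ℝ) (RatFunc ℝ) p)) : p = 0 := by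
  unfold StrictlyProperRF at h
  rw [RatFunc.num_algebraMap, RatFunc.denom_algebraMap, degree_one] at h
  by_contra hp
  exact absurd h (not_lt.mpr (zero_le_degree_iff.mpr hp))



lemma key_entry (w : ℕ) (R : Matrix (Fin w) (Fin w) (Polynomial ℝ))
    (f : Fin w → Polynomial ℝ) (j : Fin w) :
    Matrix.vecMul (fun i => algebraMap (Polynomial ℝ) (RatFunc ℝ) (f i))
      ((R.map (algebraMap (Polynomial ℝ) (RatFunc ℝ)))⁻¹) j =
    algebraMap (Polynomial ℝ) (RatFunc ℝ) (Matrix.vecMul f R.adjugate j) /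
      algebraMap (Polynomial ℝ) (RatFunc ℝ) R.det := by
  classical
  set φ := algebraMap (Polynomial ℝ) (RatFunc ℝ) with hφ
  have hdet : (R.map φ).det = φ R.det := by
    rw [← RingHom.mapMatrix_apply, ← RingHom.map_det]
  have hadj : (R.map φ).adjugate = (R.adjugate).map φ := by
    rw [← RingHom.mapMatrix_apply, ← RingHom.map_adjugate, RingHom.mapMatrix_apply]
  rw [Matrix.inv_def, hdet, hadj, Ring.inverse_eq_inv']
  simp only [Matrix.vecMul, dotProduct, Matrix.smul_apply, Matrix.map_apply,
    smul_eq_mul, map_sum, _root_.map_mul, div_eq_mul_inv, Finset.sum_mul]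
  refine Finset.sum_congr rfl fun i _ => by ring



noncomputable section

lemma vecMul_smul_one {n : ℕ} (x : Fin n → Polynomial ℝ) (c : Polynomial ℝ) :
    x ᵥ* (c • (1 : Matrix (Fin n) (Fin n) (Polynomial ℝ))) = c • x := by
  ext j
  simp [Matrix.vecMul, dotProduct, Matrix.one_apply, mul_ite, Finset.sum_ite_eq, mul_comm]

lemma vecMulLinear_inj {w : ℕ} (R : Matrix (Fin w) (Fin w) (Polynomial ℝ)) (hR : R.det ≠ 0) :
    Function.Injective (Matrix.vecMulLinear R) := by
  rw [injective_iff_map_eq_zero]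
  intro x hx
  have h0 : Matrix.vecMul x R = 0 := by simpa [Matrix.vecMulLinear_apply] using hx
  have h1 : R.det • x = 0 := by
    have h2 := congrArg (fun v => Matrix.vecMul v R.adjugate) h0
    simp only [Matrix.vecMul_vecMul, Matrix.mul_adjugate, Matrix.zero_vecMul] at h2
    rw [vecMul_smul_one] at h2
    exact h2
  funext i
  have := congrFun h1 i
  simp only [Pi.smul_apply, smul_eq_mul, Pi.zero_apply] at this
  exact (mul_eq_zero.mp this).resolve_left hR
end


noncomputable section


lemma finrank_quot_span (p : Polynomial ℝ) (hp : p ≠ 0) :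
    Module.finrank ℝ ((Polynomial ℝ) ⧸ (Ideal.span {p} : Ideal (Polynomial ℝ))) = p.natDegree := by
  classical
  set n := p.natDegree
  set I : Submodule (Polynomial ℝ) (Polynomial ℝ) := (Ideal.span {p} : Ideal (Polynomial ℝ))
  let ψ : degreeLT ℝ n →ₗ[ℝ] (Polynomial ℝ ⧸ I) :=
    (I.mkQ.restrictScalars ℝ).comp (Submodule.subtype _)
  have hb : Function.Bijective ψ := by
    constructor
    · rw [injective_iff_map_eq_zero]
      rintro ⟨x, hx⟩ h
      have hxI : x ∈ I := by
        simpa [ψ, I, Ideal.Quotient.eq_zero_iff_mem] using h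
      have hdvd : p ∣ x := Ideal.mem_span_singleton.mp hxI
      have hdeg : x.degree < p.degree := by
        rw [mem_degreeLT] at hx
        exact lt_of_lt_of_le hx (degree_eq_natDegree hp).ge
      exact Subtype.ext (Polynomial.eq_zero_of_dvd_of_degree_lt hdvd hdeg)
    · intro y
      obtain ⟨x, rfl⟩ := Submodule.Quotient.mk_surjective I y
      refine ⟨⟨x % p, ?_⟩, ?_⟩
      · rw [mem_degreeLT]
        calc (x % p).degree < p.degree := EuclideanDomain.mod_lt _ hp
        _ ≤ (n : WithBot ℕ) := by rw [degree_eq_natDegree hp]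
      · show Submodule.Quotient.mk (x % p) = Submodule.Quotient.mk x
        rw [Submodule.Quotient.eq]
        refine Ideal.mem_span_singleton.mpr ?_
        have := EuclideanDomain.div_add_mod x p
        exact ⟨-(x / p), by linear_combination this⟩
  have := (LinearEquiv.ofBijective ψ hb).finrank_eq
  rw [← this, (Polynomial.degreeLTEquiv ℝ n).finrank_eq]
  simp

lemma fd_quot_span (p : Polynomial ℝ) (hp : p ≠ 0) :
    FiniteDimensional ℝ ((Polynomial ℝ) ⧸ (Ideal.span {p} : Ideal (Polynomial ℝ))) := by
  classical
  set n := p.natDegree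
  set I : Submodule (Polynomial ℝ) (Polynomial ℝ) := (Ideal.span {p} : Ideal (Polynomial ℝ))
  let ψ : degreeLT ℝ n →ₗ[ℝ] (Polynomial ℝ ⧸ I) :=
    (I.mkQ.restrictScalars ℝ).comp (Submodule.subtype _)
  have hsurj : Function.Surjective ψ := by
    intro y
    obtain ⟨x, rfl⟩ := Submodule.Quotient.mk_surjective I y
    refine ⟨⟨x % p, ?_⟩, ?_⟩
    · rw [mem_degreeLT]
      calc (x % p).degree < p.degree := EuclideanDomain.mod_lt _ hp
      _ ≤ (n : WithBot ℕ) := by rw [degree_eq_natDegree hp]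
    · show Submodule.Quotient.mk (x % p) = Submodule.Quotient.mk x
      rw [Submodule.Quotient.eq]
      refine Ideal.mem_span_singleton.mpr ?_
      have := EuclideanDomain.div_add_mod x p
      exact ⟨-(x / p), by linear_combination this⟩
  haveI : FiniteDimensional ℝ (degreeLT ℝ n) :=
    Module.Finite.equiv (Polynomial.degreeLTEquiv ℝ n).symm
  exact Module.Finite.of_surjective ψ hsurj


lemma coe_basisR {w : ℕ} (R : Matrix (Fin w) (Fin w) (Polynomial ℝ))
    (hinj : Function.Injective (Matrix.vecMulLinear R)) (i : Fin w) :
    ((((Pi.basisFun (Polynomial ℝ) (Fin w)).map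
        (LinearEquiv.ofInjective (Matrix.vecMulLinear R) hinj)) i : Fin w → Polynomial ℝ)) =
      fun j => R i j := by
  have h1 : (((Pi.basisFun (Polynomial ℝ) (Fin w)).map
      (LinearEquiv.ofInjective (Matrix.vecMulLinear R) hinj)) i : Fin w → Polynomial ℝ)
      = Matrix.vecMul (Pi.single i 1) R := by
    rw [Module.Basis.map_apply, LinearEquiv.ofInjective_apply, Matrix.vecMulLinear_apply,
      Pi.basisFun_apply]
  rw [h1]
  funext j
  simp [Matrix.vecMul, dotProduct, Pi.single_apply, ite_mul, Finset.sum_ite_eq]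

set_option maxHeartbeats 1000000 in
lemma finrank_coker {w : ℕ} (R : Matrix (Fin w) (Fin w) (Polynomial ℝ)) (hR : R.det ≠ 0)
    (hinj : Function.Injective (Matrix.vecMulLinear R)) :
    Module.finrank ℝ ((Fin w → Polynomial ℝ) ⧸ LinearMap.range (Matrix.vecMulLinear R))
      = R.det.natDegree := by
  classical
  set N : Submodule (Polynomial ℝ) (Fin w → Polynomial ℝ) :=
    LinearMap.range (Matrix.vecMulLinear R) with hN
  obtain ⟨m, snf⟩ := N.smithNormalForm (Pi.basisFun (Polynomial ℝ) (Fin w))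
  let basisR : Module.Basis (Fin w) (Polynomial ℝ) N :=
    (Pi.basisFun (Polynomial ℝ) (Fin w)).map
      (LinearEquiv.ofInjective (Matrix.vecMulLinear R) hinj)
  obtain rfl : w = m := by
    simpa using Fintype.card_congr (basisR.indexEquiv snf.bN)
  set bM := snf.bM with hbM
  set bN := snf.bN with hbN
  set femb := snf.f with hfemb
  set a := snf.a with ha
  have hsnf : ∀ i, ((bN i : Fin w → Polynomial ℝ)) = a i • bM (femb i) := snf.snf
  -- the embedding is an equivalence
  let fe : Fin w ≃ Fin w := Equiv.ofBijective femb
    ((Fintype.bijective_iff_injective_and_card femb).mpr ⟨femb.injective, rfl⟩)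
  set a' : Fin w → Polynomial ℝ := fun j => a (fe.symm j) with ha'
  have hfa : ∀ j, femb (fe.symm j) = j := fun j => fe.apply_symm_apply j
  -- reindexed basis of N
  let bN' : Module.Basis (Fin w) (Polynomial ℝ) N := bN.reindex fe
  have hbN' : ∀ j, ((bN' j : Fin w → Polynomial ℝ)) = a' j • bM j := by
    intro j
    rw [Module.Basis.reindex_apply, hsnf (fe.symm j), hfa j]
  -- determinant relation
  set e : Module.Basis (Fin w) (Polynomial ℝ) (Fin w → Polynomial ℝ) :=
    Pi.basisFun (Polynomial ℝ) (Fin w) with he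
  have hdiag : bM.toMatrix (fun j => ((bN' j : Fin w → Polynomial ℝ))) = Matrix.diagonal a' := by
    refine Matrix.ext fun k j => ?_
    rw [Module.Basis.toMatrix_apply, hbN' j, _root_.map_smul]
    simp only [Finsupp.smul_apply, Module.Basis.repr_self, Finsupp.single_apply, smul_eq_mul,
      Matrix.diagonal_apply]
    by_cases h : k = j
    · subst h; simp
    · simp [h, Ne.symm h]
  have hRT : e.toMatrix (fun i => ((basisR i : Fin w → Polynomial ℝ))) = R.transpose := by
    refine Matrix.ext fun j i => ?_
    rw [Module.Basis.toMatrix_apply, coe_basisR R hinj i]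
    simp [e, Matrix.transpose_apply]
  set W : Matrix (Fin w) (Fin w) (Polynomial ℝ) := bN'.toMatrix ⇑basisR with hW
  have hWunit : IsUnit W.det := by
    refine IsUnit.of_mul_eq_one (basisR.toMatrix ⇑bN').det ?_
    rw [← Matrix.det_mul, Module.Basis.toMatrix_mul_toMatrix_flip, Matrix.det_one]
  have hexp : ∀ i, ((basisR i : Fin w → Polynomial ℝ))
      = ∑ k, W k i • ((bN' k : Fin w → Polynomial ℝ)) := by
    intro i
    have h1 : ∑ k, W k i • bN' k = basisR i := Module.Basis.sum_toMatrix_smul_self bN' (fun t => basisR t) i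
    calc ((basisR i : Fin w → Polynomial ℝ)) = ((∑ k, W k i • bN' k : N) : Fin w → Polynomial ℝ) := by
          rw [h1]
    _ = ∑ k, W k i • ((bN' k : Fin w → Polynomial ℝ)) := by
          push_cast
          rfl
  have hsplit : e.toMatrix (fun i => ((basisR i : Fin w → Polynomial ℝ)))
      = e.toMatrix (fun j => ((bN' j : Fin w → Polynomial ℝ))) * W := by
    refine Matrix.ext fun j i => ?_
    rw [Module.Basis.toMatrix_apply, hexp i, map_sum, Finsupp.finset_sum_apply, Matrix.mul_apply]
    refine Finset.sum_congr rfl fun k _ => ?_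
    rw [_root_.map_smul, Finsupp.smul_apply, Module.Basis.toMatrix_apply, smul_eq_mul, mul_comm]
  have hdet1 : R.det = (e.toMatrix ⇑bM).det * ((∏ j, a' j) * W.det) := by
    have h2 : R.transpose = e.toMatrix ⇑bM * Matrix.diagonal a' * W := by
      rw [← hRT, hsplit, ← hdiag, Module.Basis.toMatrix_mul_toMatrix e bM]
    calc R.det = R.transpose.det := (Matrix.det_transpose R).symm
    _ = _ := by rw [h2, Matrix.det_mul, Matrix.det_mul, Matrix.det_diagonal]; ring
  have hMunit : IsUnit (e.toMatrix ⇑bM).det := by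
    refine IsUnit.of_mul_eq_one (bM.toMatrix ⇑e).det ?_
    rw [← Matrix.det_mul, Module.Basis.toMatrix_mul_toMatrix_flip, Matrix.det_one]
  have hprodne : (∏ j, a' j) ≠ 0 := by
    intro h0
    rw [hdet1, h0, zero_mul, mul_zero] at hR
    exact hR rfl
  have ha'ne : ∀ j, a' j ≠ 0 := fun j hj =>
    hprodne (Finset.prod_eq_zero (Finset.mem_univ j) hj)
  have hdeg : R.det.natDegree = ∑ j, (a' j).natDegree := by
    rw [hdet1, natDegree_mul hMunit.ne_zero (mul_ne_zero hprodne hWunit.ne_zero),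
      natDegree_mul hprodne hWunit.ne_zero,
      natDegree_eq_zero_of_isUnit hMunit, natDegree_eq_zero_of_isUnit hWunit,
      natDegree_prod _ _ (fun j _ => ha'ne j)]
    ring
  -- membership characterization
  have mem_iff : ∀ x : Fin w → Polynomial ℝ, x ∈ N ↔ ∀ j, a' j ∣ bM.repr x j := by
    intro x
    constructor
    · intro hx j
      have h1 := snf.repr_apply_embedding_eq_repr_smul (m := ⟨x, hx⟩) (i := fe.symm j)
      rw [← hfemb, ← hbM, ← hbN, ← ha] at h1
      rw [hfa j] at h1
      have h2 : bN.repr (a (fe.symm j) • (⟨x, hx⟩ : N)) (fe.symm j)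
          = a (fe.symm j) * bN.repr (⟨x, hx⟩ : N) (fe.symm j) := by
        rw [_root_.map_smul]; simp [smul_eq_mul]
      exact ⟨bN.repr (⟨x, hx⟩ : N) (fe.symm j), by
        rw [show (bM.repr x) j = (bM.repr ((⟨x, hx⟩ : N) : Fin w → Polynomial ℝ)) j from rfl,
          h1, h2]⟩
    · intro hx
      have key : ∀ i, a i ∣ bM.repr x (femb i) := by
        intro i
        have h2 : fe.symm (femb i) = i := fe.symm_apply_apply i
        have h3 := hx (femb i)
        rw [ha'] at h3
        simpa only [h2] using h3
      choose c hc using key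
      set y : N := ∑ i, c i • bN i with hy
      have hyc : ∀ j, bM.repr (↑y) j = bM.repr x j := by
        intro j
        have hycoe : ((y : Fin w → Polynomial ℝ)) = ∑ i, c i • (a i • bM (femb i)) := by
          rw [hy]
          push_cast
          refine Finset.sum_congr rfl fun i _ => ?_
          rw [hsnf i]
        rw [hycoe, map_sum, Finsupp.finset_sum_apply]
        simp only [_root_.map_smul, Module.Basis.repr_self, Finsupp.smul_apply, Finsupp.single_apply,
          smul_eq_mul]
        rw [Finset.sum_eq_single (fe.symm j)]
        · rw [hfa j, if_pos rfl, mul_one, mul_comm]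
          conv_rhs => rw [← hfa j]
          exact (hc (fe.symm j)).symm
        · intro i _ hi
          rw [if_neg, mul_zero, mul_zero]
          intro hij
          exact hi (by rw [← hij]; exact (fe.symm_apply_apply i).symm)
        · intro h; exact absurd (Finset.mem_univ _) h
      have hxy : x = ↑y := bM.ext_elem fun j => (hyc j).symm
      rw [hxy]
      exact y.2
  -- transport along bM.equivFun and split as a product
  set I' : Submodule (Polynomial ℝ) (Fin w → Polynomial ℝ) :=
    Submodule.pi Set.univ (fun j => (Ideal.span {a' j} : Ideal (Polynomial ℝ))) with hI'
  have hmap : Submodule.map (bM.equivFun : (Fin w → Polynomial ℝ) →ₗ[Polynomial ℝ] (Fin w → Polynomial ℝ)) N = I' := by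
    ext x
    simp only [Submodule.mem_map]
    constructor
    · rintro ⟨y, hy, rfl⟩
      rw [mem_iff] at hy
      simp only [hI', Submodule.mem_pi, Ideal.mem_span_singleton, Module.Basis.equivFun_apply]
      intro j _
      exact hy j
    · intro hx
      simp only [hI', Submodule.mem_pi, Ideal.mem_span_singleton] at hx
      refine ⟨bM.equivFun.symm x, ?_, bM.equivFun.apply_symm_apply x⟩
      rw [mem_iff]
      intro j
      have hrepr : bM.repr (bM.equivFun.symm x) j = x j := by
        rw [← Module.Basis.equivFun_apply, LinearEquiv.apply_symm_apply]
      rw [hrepr]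
      exact hx j (Set.mem_univ j)
  let E : ((Fin w → Polynomial ℝ) ⧸ N) ≃ₗ[Polynomial ℝ]
      ((j : Fin w) → (Polynomial ℝ) ⧸ (Ideal.span {a' j} : Ideal (Polynomial ℝ))) :=
    (Submodule.Quotient.equiv N I' bM.equivFun hmap).trans
      (Submodule.quotientPi (fun j => (Ideal.span {a' j} : Ideal (Polynomial ℝ))))
  haveI : ∀ j, FiniteDimensional ℝ
      ((Polynomial ℝ) ⧸ (Ideal.span {a' j} : Ideal (Polynomial ℝ))) :=
    fun j => fd_quot_span _ (ha'ne j)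
  have h4 := (E.restrictScalars ℝ).finrank_eq
  rw [h4, Module.finrank_pi_fintype ℝ, hdeg]
  exact Finset.sum_congr rfl fun j _ => finrank_quot_span _ (ha'ne j)
end

noncomputable section
lemma vecMul_adj {w : ℕ} (R : Matrix (Fin w) (Fin w) (Polynomial ℝ))
    (x : Fin w → Polynomial ℝ) :
    Matrix.vecMul (Matrix.vecMul x R) R.adjugate = R.det • x := by
  rw [Matrix.vecMul_vecMul, Matrix.mul_adjugate, vecMul_smul_one]
end

end helperLemmas

/-- for a nonsingular `R ∈ ℝ[ξ]^{w×w}`, the set of polynomial row vectors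
`f` with `f R⁻¹` strictly proper is an ℝ-subspace of dimension `deg det R`. -/
theorem stmt5 (w : ℕ)
    (R : Matrix (Fin w) (Fin w) (Polynomial ℝ)) (hR : R.det ≠ 0) :
    ∃ V : Submodule ℝ (Fin w → Polynomial ℝ),
      (V : Set (Fin w → Polynomial ℝ)) =
        { f | ∀ j, StrictlyProperRF
            (Matrix.vecMul (fun i => algebraMap (Polynomial ℝ) (RatFunc ℝ) (f i))
              ((R.map (algebraMap (Polynomial ℝ) (RatFunc ℝ)))⁻¹) j) } ∧
      Module.finrank ℝ V = R.det.natDegree := by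
  classical
  set n := R.det.natDegree with hn
  let T : (Fin w → Polynomial ℝ) →ₗ[ℝ] (Fin w → Polynomial ℝ) :=
    (Matrix.vecMulLinear R.adjugate).restrictScalars ℝ
  set V : Submodule ℝ (Fin w → Polynomial ℝ) :=
    Submodule.comap T (Submodule.pi Set.univ fun _ => degreeLT ℝ n) with hV
  have hmemV : ∀ f, f ∈ V ↔ ∀ j, (Matrix.vecMul f R.adjugate j).degree < (n : WithBot ℕ) := by
    intro f
    rw [hV, Submodule.mem_comap]
    simp only [T, LinearMap.restrictScalars_apply, Matrix.vecMulLinear_apply,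
      Submodule.mem_pi, Set.mem_univ, forall_true_left, mem_degreeLT]
  refine ⟨V, ?_, ?_⟩
  · ext f
    simp only [SetLike.mem_coe, Set.mem_setOf_eq]
    rw [hmemV f]
    refine forall_congr' fun j => ?_
    rw [key_entry w R f j, sp_div_iff _ _ hR, degree_eq_natDegree hR]
  · set N : Submodule (Polynomial ℝ) (Fin w → Polynomial ℝ) :=
      LinearMap.range (Matrix.vecMulLinear R) with hN
    let ψ : V →ₗ[ℝ] ((Fin w → Polynomial ℝ) ⧸ N) :=
      (N.mkQ.restrictScalars ℝ).comp V.subtype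
    have hdegdet : R.det.degree = (n : WithBot ℕ) := degree_eq_natDegree hR
    have hb : Function.Bijective ψ := by
      constructor
      · rw [injective_iff_map_eq_zero]
        rintro ⟨x, hx⟩ h
        have hxN : x ∈ N := by
          simpa [ψ, Submodule.Quotient.mk_eq_zero] using h
        obtain ⟨g, hg⟩ := hxN
        rw [hmemV] at hx
        have hg0 : g = 0 := by
          funext j
          by_contra hgj
          have h1 := hx j
          rw [← hg] at h1
          have h2 : Matrix.vecMul (Matrix.vecMulLinear R g) R.adjugate = R.det • g := by
            rw [Matrix.vecMulLinear_apply, vecMul_adj]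
          rw [h2] at h1
          simp only [Pi.smul_apply, smul_eq_mul] at h1
          rw [degree_mul, hdegdet] at h1
          have h3 : (0 : WithBot ℕ) ≤ (g j).degree := zero_le_degree_iff.mpr hgj
          have h4 : (n : WithBot ℕ) ≤ (n : WithBot ℕ) + (g j).degree := le_add_of_nonneg_right h3
          exact absurd (lt_of_le_of_lt h4 h1) (lt_irrefl _)
        refine Subtype.ext ?_
        show x = 0
        rw [← hg, hg0, map_zero]
      · intro y
        obtain ⟨x, rfl⟩ := Submodule.Quotient.mk_surjective N y
        set q : Fin w → Polynomial ℝ := fun j => (Matrix.vecMul x R.adjugate j) / R.det with hq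
        set g : Fin w → Polynomial ℝ := x - Matrix.vecMul q R with hgdef
        have hgV : g ∈ V := by
          rw [hmemV]
          intro j
          have h5 : Matrix.vecMul g R.adjugate j
              = Matrix.vecMul x R.adjugate j - R.det * q j := by
            rw [hgdef, Matrix.sub_vecMul, vecMul_adj]
            simp
          rw [h5, hq]
          have := EuclideanDomain.mod_eq_sub_mul_div (Matrix.vecMul x R.adjugate j) R.det
          rw [← this, ← hdegdet]
          exact EuclideanDomain.mod_lt _ hR
        refine ⟨⟨g, hgV⟩, ?_⟩
        show Submodule.Quotient.mk g = Submodule.Quotient.mk x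
        rw [Submodule.Quotient.eq]
        refine ⟨-q, ?_⟩
        rw [Matrix.vecMulLinear_apply, hgdef]
        simp [Matrix.neg_vecMul]
    rw [(LinearEquiv.ofBijective ψ hb).finrank_eq]
    exact finrank_coker R hR (vecMulLinear_inj R hR)
end

section
/- Let R₁, R₂ ∈ ℝ[ξ]^{w×w} be nonsingular polynomial matrices such that R₂ R₁⁻¹ is a strictly proper rational matrix. Then 𝔛(R₂) ⊆ 𝔛(R₁), where 𝔛(Rᵢ) = { f ∈ ℝ[ξ]^{1×w} : f Rᵢ⁻¹ strictly proper }. Consequently deg det R₂ < deg det R₁ whenever R₂ ≠ 0. -/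
open Matrix Polynomial

lemma sp_iff {g : RatFunc ℝ} : StrictlyProperRF g ↔ g = 0 ∨ g.intDegree < 0 := by
  rcases eq_or_ne g 0 with rfl | hg
  · simp only [StrictlyProperRF, RatFunc.num_zero, RatFunc.denom_zero, Polynomial.degree_zero,
      Polynomial.degree_one]
    simp [WithBot.bot_lt_coe]
  · have hnum : g.num ≠ 0 := RatFunc.num_ne_zero hg
    constructor
    · intro h
      right
      have := (Polynomial.natDegree_lt_natDegree_iff hnum).mpr h
      simp [RatFunc.intDegree]
      omega
    · rintro (h | h)
      · exact absurd h hg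
      · simp only [RatFunc.intDegree] at h
        exact (Polynomial.natDegree_lt_natDegree_iff hnum).mp (by omega)

lemma sp_zero : StrictlyProperRF 0 := sp_iff.mpr (Or.inl rfl)

/-- "proper or zero" -/
def PropRF (g : RatFunc ℝ) : Prop := g = 0 ∨ g.intDegree ≤ 0

lemma prop_of_sp {g : RatFunc ℝ} (h : StrictlyProperRF g) : PropRF g := by
  rcases sp_iff.mp h with h | h
  · exact Or.inl h
  · exact Or.inr h.le

lemma prop_one : PropRF 1 := Or.inr (by simp [RatFunc.intDegree_one])

lemma prop_mul {x y : RatFunc ℝ} (hx : PropRF x) (hy : PropRF y) : PropRF (x * y) := by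
  rcases hx with rfl | hx
  · exact Or.inl (by simp)
  rcases hy with rfl | hy
  · exact Or.inl (by simp)
  rcases eq_or_ne x 0 with rfl | hx0
  · exact Or.inl (by simp)
  rcases eq_or_ne y 0 with rfl | hy0
  · exact Or.inl (by simp)
  exact Or.inr (by rw [RatFunc.intDegree_mul hx0 hy0]; omega)

lemma sp_mul_prop {x y : RatFunc ℝ} (hx : StrictlyProperRF x) (hy : PropRF y) :
    StrictlyProperRF (x * y) := by
  rcases sp_iff.mp hx with rfl | hx
  · simpa using sp_zero
  rcases hy with rfl | hy
  · simpa using sp_zero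
  rcases eq_or_ne x 0 with rfl | hx0
  · simpa using sp_zero
  rcases eq_or_ne y 0 with rfl | hy0
  · simpa using sp_zero
  exact sp_iff.mpr (Or.inr (by rw [RatFunc.intDegree_mul hx0 hy0]; omega))

lemma sp_add {x y : RatFunc ℝ} (hx : StrictlyProperRF x) (hy : StrictlyProperRF y) :
    StrictlyProperRF (x + y) := by
  rcases sp_iff.mp hx with rfl | hx
  · simpa using hy
  rcases sp_iff.mp hy with rfl | hy
  · simpa using sp_iff.mpr (Or.inr hx)
  rcases eq_or_ne (x + y) 0 with h0 | h0
  · rw [h0]; exact sp_zero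
  have hy0 : y ≠ 0 := fun h => by simp [h, RatFunc.intDegree_zero] at hy
  refine sp_iff.mpr (Or.inr ?_)
  have := RatFunc.intDegree_add_le hy0 h0
  omega

lemma sp_neg {x : RatFunc ℝ} (hx : StrictlyProperRF x) : StrictlyProperRF (-x) := by
  rcases sp_iff.mp hx with rfl | hx
  · simpa using sp_zero
  · exact sp_iff.mpr (Or.inr (by rwa [RatFunc.intDegree_neg]))

lemma sp_sum {s : Finset ι} {f : ι → RatFunc ℝ} (h : ∀ i ∈ s, StrictlyProperRF (f i)) :
    StrictlyProperRF (∑ i ∈ s, f i) := by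
  classical
  induction s using Finset.induction_on with
  | empty => simpa using sp_zero
  | insert _ _ hns ih =>
      rw [Finset.sum_insert hns]
      exact sp_add (h _ (Finset.mem_insert_self _ _)) (ih fun i hi => h i (Finset.mem_insert_of_mem hi))

noncomputable def toRF (w : ℕ) (R : Matrix (Fin w) (Fin w) (Polynomial ℝ)) :
    Matrix (Fin w) (Fin w) (RatFunc ℝ) :=
  R.map (algebraMap (Polynomial ℝ) (RatFunc ℝ))

lemma toRF_det (w : ℕ) (R : Matrix (Fin w) (Fin w) (Polynomial ℝ)) :
    (toRF w R).det = algebraMap (Polynomial ℝ) (RatFunc ℝ) R.det := by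
  rw [toRF, ← RingHom.mapMatrix_apply, ← RingHom.map_det]

/-- The "state space" `𝔛(R)` of polynomial row vectors `f` such that `f R⁻¹` is
strictly proper. -/
def XSpace (w : ℕ) (R : Matrix (Fin w) (Fin w) (Polynomial ℝ)) :
    Set (Fin w → Polynomial ℝ) :=
  { f | ∀ j, StrictlyProperRF
      (Matrix.vecMul (fun i => algebraMap (Polynomial ℝ) (RatFunc ℝ) (f i))
        ((toRF w R)⁻¹) j) }

/-- if `R₂ R₁⁻¹` is strictly proper then `𝔛(R₂) ⊆ 𝔛(R₁)`, and
`deg det R₂ < deg det R₁` whenever `R₂ ≠ 0`. -/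
theorem stmt6 (w : ℕ)
    (R₁ R₂ : Matrix (Fin w) (Fin w) (Polynomial ℝ))
    (hR₁ : R₁.det ≠ 0) (hR₂ : R₂.det ≠ 0)
    (hsp : ∀ i j, StrictlyProperRF ((toRF w R₂ * (toRF w R₁)⁻¹) i j)) :
    XSpace w R₂ ⊆ XSpace w R₁ ∧
      (R₂ ≠ 0 → R₂.det.natDegree < R₁.det.natDegree) := by
  classical
  set A := toRF w R₁ with hA
  set B := toRF w R₂ with hB
  have hAdet : A.det = algebraMap (Polynomial ℝ) (RatFunc ℝ) R₁.det := toRF_det w R₁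
  have hBdet : B.det = algebraMap (Polynomial ℝ) (RatFunc ℝ) R₂.det := toRF_det w R₂
  have hAne : A.det ≠ 0 := hAdet ▸ RatFunc.algebraMap_ne_zero hR₁
  have hBne : B.det ≠ 0 := hBdet ▸ RatFunc.algebraMap_ne_zero hR₂
  have hAu : IsUnit A.det := isUnit_iff_ne_zero.mpr hAne
  have hBu : IsUnit B.det := isUnit_iff_ne_zero.mpr hBne
  constructor
  · intro f hf j
    set v : Fin w → RatFunc ℝ := fun i => algebraMap (Polynomial ℝ) (RatFunc ℝ) (f i)
    have key : Matrix.vecMul v A⁻¹ = Matrix.vecMul (Matrix.vecMul v B⁻¹) (B * A⁻¹) := by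
      rw [Matrix.vecMul_vecMul, ← Matrix.mul_assoc, Matrix.nonsing_inv_mul B hBu,
        Matrix.one_mul]
    rw [key]
    simp only [Matrix.vecMul, dotProduct]
    exact sp_sum fun i _ => sp_mul_prop (hf i) (prop_of_sp (hsp i j))
  · intro hne
    obtain ⟨n, rfl⟩ : ∃ n, w = n + 1 := by
      cases w with
      | zero => exact absurd (Subsingleton.elim R₂ 0) hne
      | succ n => exact ⟨n, rfl⟩
    have hdet : StrictlyProperRF ((B * A⁻¹).det) := by
      rw [Matrix.det_apply]
      refine sp_sum fun σ _ => ?_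
      have hprod : StrictlyProperRF (∏ i, (B * A⁻¹) (σ i) i) := by
        rw [Fin.prod_univ_succ]
        exact sp_mul_prop (hsp _ _)
          (Finset.prod_induction _ PropRF (fun _ _ => prop_mul) prop_one
            (fun i _ => prop_of_sp (hsp _ _)))
      rw [Units.smul_def, zsmul_eq_mul]
      rcases Int.units_eq_one_or (Equiv.Perm.sign σ) with h | h <;> rw [h]
      · simpa using hprod
      · simpa using sp_neg hprod
    have hdeteq : (B * A⁻¹).det =
        algebraMap (Polynomial ℝ) (RatFunc ℝ) R₂.det *
          (algebraMap (Polynomial ℝ) (RatFunc ℝ) R₁.det)⁻¹ := by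
      rw [Matrix.det_mul, Matrix.det_nonsing_inv, hAdet, hBdet, Ring.inverse_eq_inv]
    set x := (B * A⁻¹).det with hx
    have hxne : x ≠ 0 := by
      rw [hdeteq]
      exact mul_ne_zero (RatFunc.algebraMap_ne_zero hR₂)
        (inv_ne_zero (RatFunc.algebraMap_ne_zero hR₁))
    have hxdeg : x.intDegree < 0 := by
      rcases sp_iff.mp hdet with h | h
      · exact absurd h hxne
      · exact h
    have hmul : x * algebraMap (Polynomial ℝ) (RatFunc ℝ) R₁.det =
        algebraMap (Polynomial ℝ) (RatFunc ℝ) R₂.det := by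
      rw [hdeteq]
      field_simp
      rw [mul_div_assoc, div_self (RatFunc.algebraMap_ne_zero hR₁), mul_one]
    have := RatFunc.intDegree_mul hxne (RatFunc.algebraMap_ne_zero hR₁)
    rw [hmul, RatFunc.intDegree_polynomial, RatFunc.intDegree_polynomial] at this
    omega
end

section
/- Let D, N, Q ∈ ℝ[ξ]^{w×w} with D nonsingular, satisfy the polynomial equation D(−ξ)ᵀN(ξ) + N(−ξ)ᵀD(ξ) = Q(−ξ)ᵀQ(ξ). Suppose N is Hurwitz and rank col(D(λ), Q(λ)) = w for all λ ∈ ℂ. If λ ∈ ℂ and v ∈ ℂ^w, v ≠ 0, satisfy Q(λ)v = 0 and N(λ)v = 0, a contradiction follows; hence rank col(N(λ), Q(λ)) = w for all λ ∈ ℂ. -/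
open Matrix Polynomial

/-- Evaluation of a real polynomial matrix at a complex point. -/
noncomputable def evalC {w : ℕ} (P : Matrix (Fin w) (Fin w) (Polynomial ℝ)) (z : ℂ) :
    Matrix (Fin w) (Fin w) ℂ :=
  P.map (fun p => Polynomial.aeval z p)

/-- Substitute `−ξ` for `ξ` in a polynomial matrix. -/
noncomputable def negArg {w : ℕ} (P : Matrix (Fin w) (Fin w) (Polynomial ℝ)) :
    Matrix (Fin w) (Fin w) (Polynomial ℝ) :=
  P.map (fun p => p.comp (-Polynomial.X))

lemma evalC_negArg {w : ℕ} (P : Matrix (Fin w) (Fin w) (Polynomial ℝ)) (z : ℂ) :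
    evalC (negArg P) z = evalC P (-z) := by
  ext i j
  simp [evalC, negArg, Polynomial.aeval_comp]

lemma rank_eq_iff_ker {w : ℕ} {m : Type*} [Fintype m]
    (M : Matrix m (Fin w) ℂ) :
    M.rank = w ↔ ∀ v : Fin w → ℂ, M.mulVec v = 0 → v = 0 := by
  have hker : (∀ v : Fin w → ℂ, M.mulVec v = 0 → v = 0) ↔
      LinearMap.ker M.mulVecLin = ⊥ := by
    rw [LinearMap.ker_eq_bot']
    simp [Matrix.mulVecLin_apply]
  rw [hker]
  have h2 := LinearMap.finrank_range_add_finrank_ker M.mulVecLin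
  simp only [Module.finrank_pi, Fintype.card_fin] at h2
  constructor
  · intro h
    rw [Matrix.rank] at h
    exact Submodule.finrank_eq_zero.mp (by omega)
  · intro h
    rw [h, finrank_bot] at h2
    rw [Matrix.rank]
    omega

lemma det_evalC {w : ℕ} (P : Matrix (Fin w) (Fin w) (Polynomial ℝ)) (z : ℂ) :
    (evalC P z).det = Polynomial.aeval z P.det := by
  have := ((Polynomial.aeval z : Polynomial ℝ →ₐ[ℝ] ℂ) :
      Polynomial ℝ →+* ℂ).map_det P
  simpa [evalC] using this.symm

lemma evalC_nonsing_mulVec {w : ℕ} (M : Matrix (Fin w) (Fin w) ℂ)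
    (hdet : M.det ≠ 0) {v : Fin w → ℂ} (h : M.mulVec v = 0) : v = 0 := by
  have hu : IsUnit M := (Matrix.isUnit_iff_isUnit_det _).mpr (isUnit_iff_ne_zero.mpr hdet)
  have : Function.Injective M.mulVec := Matrix.mulVec_injective_iff_isUnit.mpr hu
  have := this (a₁ := v) (a₂ := 0) (by simpa using h)
  exact this

/-- if `D(−ξ)ᵀN(ξ) + N(−ξ)ᵀD(ξ) = Q(−ξ)ᵀQ(ξ)`, `N` is Hurwitz, and
`col(D(λ),Q(λ))` has full rank `w` for all `λ ∈ ℂ`, then also `col(N(λ),Q(λ))` has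
rank `w` for all `λ ∈ ℂ`. -/
theorem stmt9 (w : ℕ)
    (D N Q : Matrix (Fin w) (Fin w) (Polynomial ℝ))
    (hDns : D.det ≠ 0)
    (hPLE : (negArg D)ᵀ * N + (negArg N)ᵀ * D = (negArg Q)ᵀ * Q)
    (hNHurwitz : ∀ z : ℂ, Polynomial.aeval z N.det = 0 → z.re < 0)
    (hrank : ∀ lam : ℂ, (Matrix.fromRows (evalC D lam) (evalC Q lam)).rank = w) :
    ∀ lam : ℂ, (Matrix.fromRows (evalC N lam) (evalC Q lam)).rank = w := by
  intro lam
  rw [rank_eq_iff_ker]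
  intro v hv0
  have hN : (evalC N lam).mulVec v = 0 := by
    funext i
    have := congrFun hv0 (Sum.inl i)
    simpa [Matrix.fromRows_mulVec] using this
  have hQ : (evalC Q lam).mulVec v = 0 := by
    funext i
    have := congrFun hv0 (Sum.inr i)
    simpa [Matrix.fromRows_mulVec] using this
  by_contra hvne
  -- det N(λ) = 0 since v is a nonzero kernel element
  have hdetN : (evalC N lam).det = 0 := by
    by_contra hdet
    exact hvne (evalC_nonsing_mulVec _ hdet hN)
  have hdetN' : Polynomial.aeval lam N.det = 0 := by
    rw [← det_evalC, hdetN]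
  have hre : lam.re < 0 := hNHurwitz lam hdetN'
  -- N(-λ) is nonsingular
  have hdetNneg : (evalC N (-lam)).det ≠ 0 := by
    intro h
    rw [det_evalC] at h
    have := hNHurwitz (-lam) h
    simp at this
    linarith
  -- evaluate the polynomial equation at λ
  have hPLEeval : (evalC N (-lam))ᵀ * (evalC D lam) =
      (evalC Q (-lam))ᵀ * (evalC Q lam) - (evalC D (-lam))ᵀ * (evalC N lam) := by
    have key := congrArg (fun M : Matrix (Fin w) (Fin w) (Polynomial ℝ) =>
      ((Polynomial.aeval lam : Polynomial ℝ →ₐ[ℝ] ℂ) :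
        Polynomial ℝ →+* ℂ).mapMatrix M) hPLE
    simp only [_root_.map_add, _root_.map_mul, RingHom.mapMatrix_apply] at key
    have hT : ∀ P : Matrix (Fin w) (Fin w) (Polynomial ℝ),
        (Pᵀ).map (((Polynomial.aeval lam : Polynomial ℝ →ₐ[ℝ] ℂ) :
          Polynomial ℝ →+* ℂ) : Polynomial ℝ → ℂ) = (evalC P lam)ᵀ :=
      fun P => Matrix.transpose_map.symm
    have e1 : (evalC (negArg D) lam)ᵀ = (evalC D (-lam))ᵀ := by rw [evalC_negArg]
    have e2 : (evalC (negArg N) lam)ᵀ = (evalC N (-lam))ᵀ := by rw [evalC_negArg]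
    have e3 : (evalC (negArg Q) lam)ᵀ = (evalC Q (-lam))ᵀ := by rw [evalC_negArg]
    rw [hT (negArg D), hT (negArg N), hT (negArg Q), e1, e2, e3] at key
    have e4 : ∀ P : Matrix (Fin w) (Fin w) (Polynomial ℝ),
        P.map (((Polynomial.aeval lam : Polynomial ℝ →ₐ[ℝ] ℂ) :
          Polynomial ℝ →+* ℂ) : Polynomial ℝ → ℂ) = evalC P lam := fun _ => rfl
    rw [e4, e4, e4] at key
    linear_combination (norm := noncomm_ring) key
  -- multiply by v
  have hDv : (evalC N (-lam))ᵀ.mulVec ((evalC D lam).mulVec v) = 0 := by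
    have := congrArg (fun M => M.mulVec v) hPLEeval
    simp only [Matrix.sub_mulVec, ← Matrix.mulVec_mulVec, hN, hQ,
      Matrix.mulVec_zero, sub_zero] at this
    exact this
  have hDv0 : (evalC D lam).mulVec v = 0 :=
    evalC_nonsing_mulVec _ (by rwa [Matrix.det_transpose]) hDv
  -- contradiction with rank of col(D, Q)
  have h1 := hrank lam
  rw [rank_eq_iff_ker] at h1
  apply hvne
  apply h1
  funext i
  cases i with
  | inl i => simpa [Matrix.fromRows_mulVec] using congrFun hDv0 i
  | inr i => simpa [Matrix.fromRows_mulVec] using congrFun hQ i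
end

section
/- Let Φ ∈ ℝ[ξ] be an even polynomial (Φ(−ξ) = Φ(ξ)) with Φ(iω) > 0 for all ω ∈ ℝ. Then there exists Q ∈ ℝ[ξ] Hurwitz with Φ(ξ) = Q(−ξ)Q(ξ) (scalar polynomial spectral factorization). -/
open Polynomial Complex

private lemma rm_neg_le {P : Polynomial ℂ} (hP : P ≠ 0)
    (hev : P.comp (-Polynomial.X) = P) (a : ℂ) :
    P.rootMultiplicity a ≤ P.rootMultiplicity (-a) := by
  rw [Polynomial.le_rootMultiplicity_iff hP]
  obtain ⟨g, hg⟩ := Polynomial.pow_rootMultiplicity_dvd P a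
  refine ⟨(-1) ^ P.rootMultiplicity a * g.comp (-Polynomial.X), ?_⟩
  conv_lhs => rw [← hev, hg]
  rw [mul_comp, pow_comp, sub_comp, X_comp, C_comp]
  have h1 : (-(X : Polynomial ℂ) - C a) = -(X - C (-a)) := by
    rw [map_neg]; ring
  rw [h1, neg_pow]; ring

private lemma filter_map_eq (s : Multiset ℂ) (f : ℂ → ℂ) (p : ℂ → Prop) [DecidablePred p]
    (h : ∀ z, p (f z) ↔ p z) : (s.map f).filter p = (s.filter p).map f := by
  rw [Multiset.filter_map]
  congr 1
  exact Multiset.filter_congr fun z _ => by simpa using h z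

/-- scalar polynomial spectral factorization.  An even real polynomial
`Φ` which is (real and) strictly positive on the imaginary axis admits a Hurwitz
spectral factor: `Φ(ξ) = Q(−ξ)Q(ξ)` with all roots of `Q` in the open left half-plane. -/
theorem stmt19 (Φ : Polynomial ℝ)
    (heven : Φ.comp (-Polynomial.X) = Φ)
    (hpos : ∀ ω : ℝ, ∃ r : ℝ, 0 < r ∧ Polynomial.aeval (Complex.I * ω) Φ = (r : ℂ)) :
    ∃ Q : Polynomial ℝ,
      (∀ z : ℂ, Polynomial.aeval z Q = 0 → z.re < 0) ∧
      Φ = Q.comp (-Polynomial.X) * Q := by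
  classical
  have hinj : Function.Injective (algebraMap ℝ ℂ) := Complex.ofReal_injective
  set P : Polynomial ℂ := Φ.map (algebraMap ℝ ℂ) with hPdef
  have haev : ∀ z : ℂ, Polynomial.aeval z Φ = P.eval z := by
    intro z; rw [hPdef, Polynomial.eval_map, Polynomial.aeval_def]
  obtain ⟨r0, hr0, hr0e⟩ := hpos 0
  have hr0P : P.eval 0 = (r0 : ℂ) := by
    rw [← haev]
    have h0 : (Complex.I * ((0 : ℝ) : ℂ)) = 0 := by simp
    rw [← h0]; exact hr0e
  have hP0 : P ≠ 0 := by
    intro h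
    rw [h] at hr0P
    simp at hr0P
    have h' : (0:ℝ) = r0 := by exact_mod_cast hr0P
    exact hr0.ne' h'.symm
  have hPev : P.comp (-Polynomial.X) = P := by
    have := congrArg (Polynomial.map (algebraMap ℝ ℂ)) heven
    rwa [Polynomial.map_comp, Polynomial.map_neg, Polynomial.map_X] at this
  set R := P.roots with hRdef
  have hnore : ∀ z ∈ R, z.re ≠ 0 := by
    intro z hz hre
    have hz0 : P.eval z = 0 := (Polynomial.isRoot_of_mem_roots hz)
    obtain ⟨r, hr, hre2⟩ := hpos z.im
    have hzi : (Complex.I * (z.im : ℂ)) = z := by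
      apply Complex.ext <;> simp [hre]
    rw [hzi, haev, hz0] at hre2
    exact hr.ne' (Complex.ofReal_eq_zero.mp hre2.symm)
  have hRneg : R.map (fun z => -z) = R := by
    refine Multiset.ext.mpr fun a => ?_
    calc Multiset.count a (R.map fun z => -z)
        = Multiset.count (-(-a)) (R.map fun z => -z) := by rw [neg_neg]
      _ = Multiset.count (-a) R :=
          Multiset.count_map_eq_count' _ R neg_injective (-a)
      _ = Multiset.count a R := by
          rw [Polynomial.count_roots, Polynomial.count_roots]
          refine le_antisymm ?_ (rm_neg_le hP0 hPev a)
          have := rm_neg_le hP0 hPev (-a)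
          rwa [neg_neg] at this
  set S := R.filter (fun z => z.re < 0) with hSdef
  have hTS : R.filter (fun z => ¬ z.re < 0) = S.map (fun z => -z) := by
    conv_lhs => rw [← hRneg]
    rw [Multiset.filter_map]
    congr 1
    refine Multiset.filter_congr fun z hz => ?_
    have hz' := hnore z hz
    simp only [Function.comp_apply, Complex.neg_re]
    constructor
    · intro h; rcases lt_or_gt_of_ne hz' with h' | h'
      · exact h'
      · exact absurd (by linarith : (-z.re) < 0) h
    · intro h; linarith
  have hRsplit : R = S + S.map (fun z => -z) := by
    rw [← hTS, hSdef]
    exact (Multiset.filter_add_not _ R).symm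
  set l : ℝ := Φ.leadingCoeff with hldef
  have hlP : P.leadingCoeff = (l : ℂ) := by
    rw [hPdef, Polynomial.leadingCoeff_map_of_injective hinj]; simp [hldef]
  have hsplits : P.Splits := IsAlgClosed.splits P
  have hfac : P = Polynomial.C P.leadingCoeff * (R.map fun z => X - C z).prod :=
    hsplits.eq_prod_roots
  set n := Multiset.card S with hndef
  set q1 : Polynomial ℂ := (S.map fun z => X - C z).prod with hq1def
  have hcomp : q1.comp (-X) =
      (-1 : Polynomial ℂ) ^ n * ((S.map fun z => -z).map fun z => X - C z).prod := by
    have heq : ∀ z : ℂ, (X - C z).comp (-X)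
        = (-1 : Polynomial ℂ) * (X - C (-z)) := by
      intro z
      rw [sub_comp, X_comp, C_comp, map_neg]
      ring
    rw [hq1def, multiset_prod_comp, Multiset.map_map, Multiset.map_map]
    simp only [Function.comp_def]
    have h1 : Multiset.map (fun z => (X - C z).comp (-X)) S
        = Multiset.map (fun z : ℂ => (-1 : Polynomial ℂ) * (X - C (-z))) S :=
      Multiset.map_congr rfl fun z _ => heq z
    rw [h1, Multiset.prod_map_mul, Multiset.map_const', Multiset.prod_replicate]
  have hq2 : ((S.map fun z => -z).map fun z => X - C z).prod
      = (-1 : Polynomial ℂ) ^ n * q1.comp (-X) := by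
    rw [hcomp, ← mul_assoc, ← mul_pow]
    norm_num
  have hPfac : P = Polynomial.C ((l : ℂ) * (-1) ^ n) * (q1.comp (-X) * q1) := by
    rw [hfac, hlP, hRsplit, Multiset.map_add, Multiset.prod_add, hq2,
      map_mul, map_pow, map_neg, map_one]
    ring
  -- conjugation invariance
  have hPconj : P.map (starRingEnd ℂ) = P := by
    rw [hPdef, Polynomial.map_map]
    congr 1
    ext x : 1
    simp
  have hRconj : R.map (starRingEnd ℂ) = R := by
    have h := hsplits.roots_map (starRingEnd ℂ)
    rw [hPconj] at h
    exact h.symm ▸ rfl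
  have hSconj : S.map (starRingEnd ℂ) = S := by
    have h := filter_map_eq R (starRingEnd ℂ) (fun z => z.re < 0) (fun z => by simp)
    rw [hRconj] at h
    rw [hSdef, ← h]
  set w : ℂ := q1.eval 0 with hwdef
  have hwprod : w = (S.map fun z => -z).prod := by
    rw [hwdef, hq1def, Polynomial.eval_multiset_prod, Multiset.map_map]
    congr 1
    refine Multiset.map_congr rfl fun z _ => ?_
    simp
  have hwconj : (starRingEnd ℂ) w = w := by
    conv_lhs => rw [hwprod]
    rw [map_multiset_prod, Multiset.map_map]
    have h2 : S.map (⇑(starRingEnd ℂ) ∘ fun z => -z)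
        = (S.map (starRingEnd ℂ)).map fun z => -z := by
      rw [Multiset.map_map]
      exact Multiset.map_congr rfl fun z _ => by simp
    rw [h2, hSconj, ← hwprod]
  have hwne : w ≠ 0 := by
    rw [hwprod]
    refine Multiset.prod_ne_zero ?_
    intro h0
    obtain ⟨z, hzS, hz0⟩ := Multiset.mem_map.mp h0
    have : z.re < 0 := (Multiset.mem_filter.mp hzS).2
    rw [neg_eq_zero] at hz0
    rw [hz0] at this
    simp at this
  have hwre : w = ((w.re : ℝ) : ℂ) := (Complex.conj_eq_iff_re.mp hwconj).symm
  have hPeval0 : P.eval 0 = (l : ℂ) * (-1) ^ n * w ^ 2 := by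
    rw [hPfac]
    simp only [eval_mul, eval_C, eval_comp, eval_neg, eval_X, neg_zero, ← hwdef]
    ring
  have hkey : l * (-1 : ℝ) ^ n * w.re ^ 2 = r0 := by
    have h := hPeval0.symm.trans hr0P
    rw [hwre] at h
    exact_mod_cast h
  have hwr : w.re ≠ 0 := by
    intro h
    apply hwne
    rw [hwre, h]
    simp
  have hsignpos : 0 < l * (-1 : ℝ) ^ n := by
    have h2 : 0 < w.re ^ 2 := by positivity
    nlinarith
  set c := Real.sqrt (l * (-1) ^ n) with hcdef
  have hc2 : c ^ 2 = l * (-1) ^ n := Real.sq_sqrt hsignpos.le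
  have hcpos : 0 < c := Real.sqrt_pos.mpr hsignpos
  set q : Polynomial ℂ := Polynomial.C (c : ℂ) * q1 with hqdef
  have hqP : q.comp (-X) * q = P := by
    rw [hqdef, mul_comp, C_comp, hPfac]
    have hcc : ((c : ℂ)) ^ 2 = (l : ℂ) * (-1) ^ n := by exact_mod_cast hc2
    rw [← hcc, sq, map_mul]
    ring
  have hqconj : q.map (starRingEnd ℂ) = q := by
    rw [hqdef, Polynomial.map_mul, Polynomial.map_C, Complex.conj_ofReal]
    congr 1
    rw [hq1def, Polynomial.map_multiset_prod, Multiset.map_map]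
    have h2 : S.map (Polynomial.map (starRingEnd ℂ) ∘ fun z => X - C z)
        = (S.map (starRingEnd ℂ)).map fun z => X - C z := by
      rw [Multiset.map_map]
      refine Multiset.map_congr rfl fun z _ => ?_
      simp [Polynomial.map_sub, Function.comp_def]
    rw [h2, hSconj]
  have hlift : ∃ Q : Polynomial ℝ, Q.map (algebraMap ℝ ℂ) = q := by
    rw [← Polynomial.mem_lifts]
    refine (Polynomial.lifts_iff_coeff_lifts q).mpr fun k => ?_
    have hck : (starRingEnd ℂ) (q.coeff k) = q.coeff k := by
      have := congrArg (fun p => Polynomial.coeff p k) hqconj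
      simpa using this
    refine ⟨(q.coeff k).re, ?_⟩
    exact Complex.conj_eq_iff_re.mp hck
  obtain ⟨Q, hQ⟩ := hlift
  refine ⟨Q, ?_, ?_⟩
  · intro z hz
    have hev : q.eval z = 0 := by
      rw [← hQ, Polynomial.eval_map, ← Polynomial.aeval_def] at *
      exact hz
    rw [hqdef, eval_mul, eval_C] at hev
    have hc0 : ((c : ℝ) : ℂ) ≠ 0 := by exact_mod_cast hcpos.ne'
    have hq1z : q1.eval z = 0 := by
      rcases mul_eq_zero.mp hev with h | h
      · exact absurd h hc0
      · exact h
    rw [hq1def, Polynomial.eval_multiset_prod] at hq1z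
    have h0 : (0 : ℂ) ∈ (S.map fun z => X - C z).map (Polynomial.eval z) :=
      Multiset.prod_eq_zero_iff.mp hq1z
    rw [Multiset.map_map] at h0
    obtain ⟨u, huS, hu0⟩ := Multiset.mem_map.mp h0
    simp only [Function.comp_apply, eval_sub, eval_X, eval_C] at hu0
    have : z = u := sub_eq_zero.mp hu0
    rw [this]
    exact (Multiset.mem_filter.mp huS).2
  · apply Polynomial.map_injective (algebraMap ℝ ℂ) hinj
    rw [Polynomial.map_mul, Polynomial.map_comp, Polynomial.map_neg, Polynomial.map_X,
      hQ, hqP]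
end
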